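/- Let N = 2n+1 with n ≥ 1, let t_j = π(2j−1)/N for j = 1,…,N, and let f_1,…,f_N and g_1,…,g_N be real numbers with Σ_{j=1}^{N} g_j = 0. Define A_{0,k} = (2/N) Σ_{j} f_j cos(k t_j), B_{0,k} = (2/N) Σ_{j} f_j sin(k t_j), A_{1,k} = (2/N) Σ_{j} g_j cos(k t_j), B_{1,k} = (2/N) Σ_{j} g_j sin(k t_j), and set T(t) = A_{0,0}/2 + (1/N) Σ_{k=1}^{n} { [(N−k)A_{0,k} − B_{1,k}] cos(kt) − [kA_{0,k} + B_{1,k}] cos((N−k)t) + [(N−k)B_{0,k} + A_{1,k}] sin(kt) + [kB_{0,k} − A_{1,k}] sin((N−k)t) }. Then for every j = 1,…,N: T(t_j) = f_j and T′(t_j) = g_j. -/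

import Mathlib

open Real Finset


lemma tele (θ : ℝ) (n : ℕ) :
    2 * Real.sin (θ/2) * ∑ k ∈ Icc 1 n, Real.cos ((k:ℝ) * θ)
      = Real.sin ((2*(n:ℝ)+1) * (θ/2)) - Real.sin (θ/2) := by
  induction n with
  | zero => simp
  | succ m ih =>
    rw [Finset.sum_Icc_succ_top (by omega : 1 ≤ m + 1), mul_add, ih]
    have h1 := Real.sin_add (((m:ℝ)+1)*θ) (θ/2)
    have h2 := Real.sin_sub (((m:ℝ)+1)*θ) (θ/2)
    push_cast
    rw [show (2*(m:ℝ)+1)*(θ/2) = ((m:ℝ)+1)*θ - θ/2 by ring,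
        show (2*((m:ℝ)+1)+1)*(θ/2) = ((m:ℝ)+1)*θ + θ/2 by ring]
    linear_combination h2 - h1

lemma dirichlet_sum (n : ℕ) (m : ℤ) :
    ∑ k ∈ Icc 1 n, Real.cos ((k:ℝ) * (2*π*(m:ℝ)/(2*(n:ℝ)+1)))
      = if (2*(n:ℤ)+1) ∣ m then (n:ℝ) else -1/2 := by
  have hd : (2*(n:ℝ)+1) ≠ 0 := by positivity
  by_cases h : (2*(n:ℤ)+1) ∣ m
  · rw [if_pos h]
    obtain ⟨c, rfl⟩ := h
    have hk : ∀ k ∈ Icc 1 n, Real.cos ((k:ℝ) * (2*π*(((2*(n:ℤ)+1)*c : ℤ):ℝ)/(2*(n:ℝ)+1))) = 1 := by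
      intro k _
      have e : (k:ℝ) * (2*π*(((2*(n:ℤ)+1)*c : ℤ):ℝ)/(2*(n:ℝ)+1)) = (((k:ℤ)*c : ℤ):ℝ) * (2*π) := by
        push_cast; field_simp
      rw [e, Real.cos_int_mul_two_pi]
    rw [Finset.sum_congr rfl hk, Finset.sum_const, Nat.card_Icc]
    simp
  · rw [if_neg h]
    have hs : Real.sin (π*(m:ℝ)/(2*(n:ℝ)+1)) ≠ 0 := by
      intro h0
      rcases Real.sin_eq_zero_iff.mp h0 with ⟨q, hq⟩
      apply h
      refine ⟨q, ?_⟩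
      have h2 : ((2*(n:ℤ)+1) * q : ℝ) = (m:ℝ) := by
        push_cast
        field_simp at hq
        linear_combination hq
      exact_mod_cast h2.symm
    have ht := tele (2*π*(m:ℝ)/(2*(n:ℝ)+1)) n
    rw [show (2*π*(m:ℝ)/(2*(n:ℝ)+1))/2 = π*(m:ℝ)/(2*(n:ℝ)+1) by ring] at ht
    rw [show (2*(n:ℝ)+1) * (π*(m:ℝ)/(2*(n:ℝ)+1)) = (m:ℝ)*π by field_simp] at ht
    rw [Real.sin_int_mul_pi] at ht
    have h2 : Real.sin (π*(m:ℝ)/(2*(n:ℝ)+1)) *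
        (2 * (∑ k ∈ Icc 1 n, Real.cos ((k:ℝ) * (2*π*(m:ℝ)/(2*(n:ℝ)+1)))) + 1) = 0 := by
      linear_combination ht
    rcases mul_eq_zero.mp h2 with h3 | h3
    · exact absurd h3 hs
    · linarith

lemma hdcos (a b x : ℝ) :
    HasDerivAt (fun y => a * Real.cos (b * y)) (-(a * b * Real.sin (b * x))) x := by
  have h1 : HasDerivAt (fun y : ℝ => b * y) b x := by simpa using (hasDerivAt_id x).const_mul b
  have h2 := (HasDerivAt.cos h1).const_mul a
  exact h2.congr_deriv (by ring)

lemma hdsin (a b x : ℝ) :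
    HasDerivAt (fun y => a * Real.sin (b * y)) (a * b * Real.cos (b * x)) x := by
  have h1 : HasDerivAt (fun y : ℝ => b * y) b x := by simpa using (hasDerivAt_id x).const_mul b
  have h2 := (HasDerivAt.sin h1).const_mul a
  exact h2.congr_deriv (by ring)

/-- The Hermite trigonometric polynomial of formula (6), built from the discrete
Fourier coefficients of the data `f_j` (function values) and `g_j` (centered
derivative values), solves the Hermite interpolation problem of order `p = 1`
on the grid `Δ_N^{(1)}` with nodes `t_j = π(2j-1)/N`, `N = 2n+1`. -/
theorem hermite_interpolation_p1_grid1 (n : ℕ) (hn : 1 ≤ n) (N : ℕ) (hN : N = 2 * n + 1)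
    (t : ℕ → ℝ) (ht : ∀ j, t j = π * (2 * (j : ℝ) - 1) / N)
    (f g : ℕ → ℝ) (hg : ∑ j ∈ Icc 1 N, g j = 0)
    (A₀ B₀ A₁ B₁ : ℕ → ℝ)
    (hA₀ : ∀ k, A₀ k = 2 / (N : ℝ) * ∑ j ∈ Icc 1 N, f j * cos ((k : ℝ) * t j))
    (hB₀ : ∀ k, B₀ k = 2 / (N : ℝ) * ∑ j ∈ Icc 1 N, f j * sin ((k : ℝ) * t j))
    (hA₁ : ∀ k, A₁ k = 2 / (N : ℝ) * ∑ j ∈ Icc 1 N, g j * cos ((k : ℝ) * t j))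
    (hB₁ : ∀ k, B₁ k = 2 / (N : ℝ) * ∑ j ∈ Icc 1 N, g j * sin ((k : ℝ) * t j))
    (T : ℝ → ℝ)
    (hT : ∀ x : ℝ, T x = A₀ 0 / 2 + (1 / (N : ℝ)) * ∑ k ∈ Icc 1 n,
      ((((N : ℝ) - k) * A₀ k - B₁ k) * cos ((k : ℝ) * x) -
       ((k : ℝ) * A₀ k + B₁ k) * cos (((N : ℝ) - k) * x) +
       (((N : ℝ) - k) * B₀ k + A₁ k) * sin ((k : ℝ) * x) +
       ((k : ℝ) * B₀ k - A₁ k) * sin (((N : ℝ) - k) * x))) :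
    ∀ j ∈ Icc 1 N, T (t j) = f j ∧ deriv T (t j) = g j := by
  intro i hi
  have hNr : (N : ℝ) = 2*(n:ℝ)+1 := by rw [hN]; push_cast; ring
  have h21 : (2*(n:ℝ)+1) ≠ 0 := by positivity
  have hNne : (N : ℝ) ≠ 0 := by rw [hNr]; positivity
  have hNt : (N : ℝ) * t i = π * (2*(i:ℝ) - 1) := by
    rw [ht i]; field_simp
  have h1c : ∀ θ : ℝ, cos ((N:ℝ) * t i - θ) = -cos θ := by
    intro θ
    rw [hNt, show π * (2*(i:ℝ)-1) - θ = (π - θ) + (((i:ℤ) - 1 : ℤ) : ℝ) * (2*π) by push_cast; ring,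
       Real.cos_add_int_mul_two_pi, Real.cos_pi_sub]
  have h1s : ∀ θ : ℝ, sin ((N:ℝ) * t i - θ) = sin θ := by
    intro θ
    rw [hNt, show π * (2*(i:ℝ)-1) - θ = (π - θ) + (((i:ℤ) - 1 : ℤ) : ℝ) * (2*π) by push_cast; ring,
       Real.sin_add_int_mul_two_pi, Real.sin_pi_sub]
  have key : ∀ j ∈ Icc 1 N, (∑ k ∈ Icc 1 n, cos ((k:ℝ) * t i - (k:ℝ) * t j))
      = if i = j then (n:ℝ) else -1/2 := by
    intro j hj
    have harg : ∀ k ∈ Icc 1 n, cos ((k:ℝ) * t i - (k:ℝ) * t j)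
        = cos ((k:ℝ) * (2*π*((((i:ℤ) - (j:ℤ)) : ℤ):ℝ)/(2*(n:ℝ)+1))) := by
      intro k _
      congr 1
      rw [ht i, ht j, hNr]
      push_cast
      ring
    rw [Finset.sum_congr rfl harg, dirichlet_sum n ((i:ℤ) - (j:ℤ))]
    simp only [mem_Icc] at hi hj
    by_cases hij : i = j
    · rw [if_pos (by simp [hij]), if_pos hij]
    · rw [if_neg _, if_neg hij]
      intro hdvd
      have h0 : (i:ℤ) - (j:ℤ) = 0 :=
        Int.eq_zero_of_dvd_of_natAbs_lt_natAbs hdvd (by omega)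
      omega
  have hsum2 : ∀ h : ℕ → ℝ,
      ∑ k ∈ Icc 1 n, ((2/(N:ℝ) * ∑ j ∈ Icc 1 N, h j * cos ((k:ℝ) * t j)) * cos ((k:ℝ) * t i)
        + (2/(N:ℝ) * ∑ j ∈ Icc 1 N, h j * sin ((k:ℝ) * t j)) * sin ((k:ℝ) * t i))
      = ∑ j ∈ Icc 1 N, h j * (2/(N:ℝ) * ∑ k ∈ Icc 1 n, cos ((k:ℝ) * t i - (k:ℝ) * t j)) := by
    intro h
    calc ∑ k ∈ Icc 1 n, ((2/(N:ℝ) * ∑ j ∈ Icc 1 N, h j * cos ((k:ℝ) * t j)) * cos ((k:ℝ) * t i)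
        + (2/(N:ℝ) * ∑ j ∈ Icc 1 N, h j * sin ((k:ℝ) * t j)) * sin ((k:ℝ) * t i))
        = ∑ k ∈ Icc 1 n, ∑ j ∈ Icc 1 N, h j * (2/(N:ℝ) * cos ((k:ℝ) * t i - (k:ℝ) * t j)) := by
          refine Finset.sum_congr rfl fun k _ => ?_
          rw [Finset.mul_sum, Finset.mul_sum, Finset.sum_mul, Finset.sum_mul,
            ← Finset.sum_add_distrib]
          refine Finset.sum_congr rfl fun j _ => ?_
          rw [Real.cos_sub]
          ring
      _ = ∑ j ∈ Icc 1 N, ∑ k ∈ Icc 1 n, h j * (2/(N:ℝ) * cos ((k:ℝ) * t i - (k:ℝ) * t j)) :=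
          Finset.sum_comm
      _ = ∑ j ∈ Icc 1 N, h j * (2/(N:ℝ) * ∑ k ∈ Icc 1 n, cos ((k:ℝ) * t i - (k:ℝ) * t j)) := by
          refine Finset.sum_congr rfl fun j _ => ?_
          rw [Finset.mul_sum, Finset.mul_sum]
  constructor
  · -- value interpolation
    rw [hT]
    have e1 : ∑ k ∈ Icc 1 n,
        ((((N : ℝ) - k) * A₀ k - B₁ k) * cos ((k : ℝ) * t i) -
         ((k : ℝ) * A₀ k + B₁ k) * cos (((N : ℝ) - k) * t i) +
         (((N : ℝ) - k) * B₀ k + A₁ k) * sin ((k : ℝ) * t i) +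
         ((k : ℝ) * B₀ k - A₁ k) * sin (((N : ℝ) - k) * t i))
        = ∑ k ∈ Icc 1 n, (N:ℝ) * (A₀ k * cos ((k:ℝ) * t i) + B₀ k * sin ((k:ℝ) * t i)) := by
      refine Finset.sum_congr rfl fun k _ => ?_
      rw [show ((N:ℝ) - k) * t i = (N:ℝ) * t i - (k:ℝ) * t i by ring, h1c, h1s]
      ring
    rw [e1, ← Finset.mul_sum, ← mul_assoc, show (1/(N:ℝ)) * (N:ℝ) = 1 by field_simp, one_mul]
    have e2 : A₀ 0 / 2 = ∑ j ∈ Icc 1 N, f j * (1/(N:ℝ)) := by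
      rw [hA₀ 0, Finset.mul_sum, Finset.sum_div]
      refine Finset.sum_congr rfl fun j _ => ?_
      simp only [Nat.cast_zero, zero_mul, Real.cos_zero, mul_one]
      ring
    rw [e2]
    simp only [hA₀, hB₀]
    rw [hsum2 f, ← Finset.sum_add_distrib]
    have e3 : ∀ j ∈ Icc 1 N, f j * (1/(N:ℝ))
        + f j * (2/(N:ℝ) * ∑ k ∈ Icc 1 n, cos ((k:ℝ) * t i - (k:ℝ) * t j))
        = if i = j then f j else 0 := by
      intro j hj
      rw [key j hj]
      by_cases hij : i = j
      · rw [if_pos hij, if_pos hij, hNr]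
        field_simp
        ring
      · rw [if_neg hij, if_neg hij]
        ring
    rw [Finset.sum_congr rfl e3, Finset.sum_ite_eq, if_pos hi]
  · -- derivative interpolation
    have hTe : T = fun x => A₀ 0 / 2 + (1 / (N : ℝ)) * ∑ k ∈ Icc 1 n,
        ((((N : ℝ) - k) * A₀ k - B₁ k) * cos ((k : ℝ) * x) -
         ((k : ℝ) * A₀ k + B₁ k) * cos (((N : ℝ) - k) * x) +
         (((N : ℝ) - k) * B₀ k + A₁ k) * sin ((k : ℝ) * x) +
         ((k : ℝ) * B₀ k - A₁ k) * sin (((N : ℝ) - k) * x)) := funext hT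
    have hd : ∀ k ∈ Icc 1 n, HasDerivAt (fun x : ℝ =>
        (((N : ℝ) - k) * A₀ k - B₁ k) * cos ((k : ℝ) * x) -
        ((k : ℝ) * A₀ k + B₁ k) * cos (((N : ℝ) - k) * x) +
        (((N : ℝ) - k) * B₀ k + A₁ k) * sin ((k : ℝ) * x) +
        ((k : ℝ) * B₀ k - A₁ k) * sin (((N : ℝ) - k) * x))
        (-((((N : ℝ) - k) * A₀ k - B₁ k) * (k:ℝ) * sin ((k:ℝ) * t i))
          - -(((k : ℝ) * A₀ k + B₁ k) * ((N:ℝ) - k) * sin (((N:ℝ) - k) * t i))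
          + (((N : ℝ) - k) * B₀ k + A₁ k) * (k:ℝ) * cos ((k:ℝ) * t i)
          + ((k : ℝ) * B₀ k - A₁ k) * ((N:ℝ) - k) * cos (((N:ℝ) - k) * t i)) (t i) :=
      fun k _ => (((hdcos _ _ _).sub (hdcos _ _ _)).add (hdsin _ _ _)).add (hdsin _ _ _)
    have hder : HasDerivAt T (0 + 1/(N:ℝ) * ∑ k ∈ Icc 1 n,
        (-((((N : ℝ) - k) * A₀ k - B₁ k) * (k:ℝ) * sin ((k:ℝ) * t i))
          - -(((k : ℝ) * A₀ k + B₁ k) * ((N:ℝ) - k) * sin (((N:ℝ) - k) * t i))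
          + (((N : ℝ) - k) * B₀ k + A₁ k) * (k:ℝ) * cos ((k:ℝ) * t i)
          + ((k : ℝ) * B₀ k - A₁ k) * ((N:ℝ) - k) * cos (((N:ℝ) - k) * t i))) (t i) := by
      rw [hTe]
      exact (hasDerivAt_const _ _).add ((HasDerivAt.fun_sum hd).const_mul _)
    rw [hder.deriv, zero_add]
    have e4 : ∑ k ∈ Icc 1 n,
        (-((((N : ℝ) - k) * A₀ k - B₁ k) * (k:ℝ) * sin ((k:ℝ) * t i))
          - -(((k : ℝ) * A₀ k + B₁ k) * ((N:ℝ) - k) * sin (((N:ℝ) - k) * t i))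
          + (((N : ℝ) - k) * B₀ k + A₁ k) * (k:ℝ) * cos ((k:ℝ) * t i)
          + ((k : ℝ) * B₀ k - A₁ k) * ((N:ℝ) - k) * cos (((N:ℝ) - k) * t i))
        = ∑ k ∈ Icc 1 n, (N:ℝ) * (A₁ k * cos ((k:ℝ) * t i) + B₁ k * sin ((k:ℝ) * t i)) := by
      refine Finset.sum_congr rfl fun k _ => ?_
      rw [show ((N:ℝ) - k) * t i = (N:ℝ) * t i - (k:ℝ) * t i by ring, h1c, h1s]
      ring
    rw [e4, ← Finset.mul_sum, ← mul_assoc, show (1/(N:ℝ)) * (N:ℝ) = 1 by field_simp, one_mul]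
    simp only [hA₁, hB₁]
    rw [hsum2 g]
    have e5 : ∀ j ∈ Icc 1 N, g j * (2/(N:ℝ) * ∑ k ∈ Icc 1 n, cos ((k:ℝ) * t i - (k:ℝ) * t j))
        = (if i = j then g j else 0) - g j * (1/(N:ℝ)) := by
      intro j hj
      rw [key j hj]
      by_cases hij : i = j
      · rw [if_pos hij, if_pos hij, hNr]
        field_simp
        ring
      · rw [if_neg hij, if_neg hij]
        ring
    rw [Finset.sum_congr rfl e5, Finset.sum_sub_distrib, Finset.sum_ite_eq, if_pos hi,
      ← Finset.sum_mul, hg, zero_mul, sub_zero]
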